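/- Let (X, ≼) be a linear order and let X be such that multisets of elements of X are well-defined. For k ∈ ℕ and a finite multiset M over X, let min^k(M) be the multiset of the k smallest elements of M (or M itself if |M| ≤ k). Then for all k ≤ m and all finite multisets M₁, M₂ over X: min^k(M₁ ⊎ M₂) = min^k(M₁ ⊎ min^m(M₂)), where ⊎ is multiset union. -/

import Mathlib

/-- The multiset of the `k` smallest elements of `M` (all of `M` if `|M| ≤ k`). -/
def minK {X : Type*} [LinearOrder X] (k : ℕ) (M : Multiset X) : Multiset X :=
  ((M.sort (· ≤ ·)).take k : List X)

private lemma take_countP {X : Type*} [LinearOrder X] (p : X → Bool)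
    (hp : ∀ a b : X, a ≤ b → p b → p a) :
    ∀ (l : List X), l.Pairwise (· ≤ ·) → ∀ n,
      (l.take n).countP p = min n (l.countP p) := by
  intro l
  induction l with
  | nil => simp
  | cons a l ih =>
    intro hl n
    cases n with
    | zero => simp
    | succ n =>
      have hl' : l.Pairwise (· ≤ ·) := hl.of_cons
      by_cases hpa : p a
      · simp only [List.take_succ_cons, List.countP_cons, hpa, if_true, ih hl' n]
        omega
      · have h0 : l.countP p = 0 := by
          rw [List.countP_eq_zero]
          intro b hb hpb
          exact hpa (hp a b (List.rel_of_pairwise_cons hl hb) hpb)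
        have h0' : (l.take n).countP p = 0 := by
          have := List.Sublist.countP_le (p := p) (List.take_sublist n l)
          omega
        simp [List.take_succ_cons, List.countP_cons, hpa, h0, h0']

private lemma countP_minK {X : Type*} [LinearOrder X] (p : X → Prop) [DecidablePred p]
    (hp : ∀ a b : X, a ≤ b → p b → p a) (k : ℕ) (M : Multiset X) :
    Multiset.countP p (minK k M) = min k (Multiset.countP p M) := by
  have hs : (M.sort (· ≤ ·)).Pairwise (· ≤ ·) := Multiset.pairwise_sort M _
  conv_rhs => rw [← Multiset.sort_eq M (· ≤ ·)]
  rw [minK, Multiset.coe_countP, Multiset.coe_countP,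
    take_countP (fun a => decide (p a)) (fun a b hab h => by
      simp only [decide_eq_true_eq] at h ⊢; exact hp a b hab h) _ hs k]

private lemma count_split {X : Type*} [LinearOrder X] (x : X) (M : Multiset X) :
    Multiset.countP (fun a => a ≤ x) M
      = Multiset.countP (fun a => a < x) M + M.count x := by
  induction M using Multiset.induction_on with
  | empty => simp
  | cons a s ih =>
    rcases lt_trichotomy a x with h | h | h
    · simp [Multiset.countP_cons, Multiset.count_cons, h, h.le, ih]
      rcases eq_or_ne x a with rfl | hne
      · exact absurd h (lt_irrefl x)
      · simp [hne]; omega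
    · subst h
      simp [Multiset.countP_cons, Multiset.count_cons, lt_irrefl, ih]
      omega
    · simp [Multiset.countP_cons, Multiset.count_cons, h.not_gt, h.not_ge, h.ne, ih]

private lemma count_minK {X : Type*} [LinearOrder X] (x : X) (k : ℕ) (M : Multiset X) :
    (minK k M).count x
      = min k (Multiset.countP (fun a => a ≤ x) M)
        - min k (Multiset.countP (fun a => a < x) M) := by
  have h1 := countP_minK (fun a => a ≤ x) (fun a b hab h => hab.trans h) k M
  have h2 := countP_minK (fun a => a < x) (fun a b hab h => hab.trans_lt h) k M
  have h3 := count_split x (minK k M)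
  have h4 := count_split x M
  omega

/-- For `k ≤ m`:
`min^k (M₁ ⊎ M₂) = min^k (M₁ ⊎ min^m M₂)`. -/
theorem minK_add {X : Type*} [LinearOrder X] (k m : ℕ) (hkm : k ≤ m)
    (M₁ M₂ : Multiset X) :
    minK k (M₁ + M₂) = minK k (M₁ + minK m M₂) := by
  ext x
  rw [count_minK, count_minK]
  have hle := countP_minK (fun a => a ≤ x) (fun a b hab h => hab.trans h) m M₂
  have hlt := countP_minK (fun a => a < x) (fun a b hab h => hab.trans_lt h) m M₂
  simp only [Multiset.countP_add, hle, hlt]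
  omega
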